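/- Let f : ℝ → ℝ be a convex function. Then f is path differentiable: for every Lipschitz curve γ : ℝ → ℝ, for almost every t, the composition f∘γ is differentiable at t and (f∘γ)'(t) = v·γ'(t) for all v ∈ ∂f(γ(t)), where ∂f is the (convex) subdifferential. -/

import Mathlib

open Filter

/-- The subdifferential of a convex function `f : ℝ → ℝ`. -/
def convexSubdiff (f : ℝ → ℝ) (x : ℝ) : Set ℝ :=
  {v | ∀ y : ℝ, f x + v * (y - x) ≤ f y}

/-- A convex function on `ℝ` is Lipschitz on every ball. -/
lemma convexOn_exists_lipschitzOnWith (f : ℝ → ℝ) (hf : ConvexOn ℝ Set.univ f)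
    (x : ℝ) (r : ℝ) : ∃ K', LipschitzOnWith K' f (Metric.ball x r) := by
  have hball : ConvexOn ℝ (Metric.ball x (r + 1)) f :=
    hf.subset (Set.subset_univ _) (convex_ball x (r + 1))
  have hcont : Continuous f := hf.locallyLipschitz.continuous
  have hbd : Bornology.IsBounded (f '' Metric.ball x (r + 1)) := by
    apply Bornology.IsBounded.subset
      (((isCompact_closedBall x (r + 1)).image hcont).isBounded)
    exact Set.image_mono Metric.ball_subset_closedBall
  exact hball.exists_lipschitzOnWith_of_isBounded (by linarith) hbd

/-- A convex function `f : ℝ → ℝ` is path differentiable: for every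
Lipschitz curve `γ : ℝ → ℝ`, for a.e. `t` the curve is differentiable at `t` and
`f ∘ γ` is differentiable at `t` with derivative `v * γ′(t)` for every subgradient
`v ∈ ∂f(γ t)`. -/
theorem stmt9 (f : ℝ → ℝ) (hf : ConvexOn ℝ Set.univ f) :
    ∀ (γ : ℝ → ℝ) (K : NNReal), LipschitzWith K γ →
      ∀ᵐ t : ℝ, ∃ d : ℝ, HasDerivAt γ d t ∧
        ∀ v ∈ convexSubdiff f (γ t), HasDerivAt (f ∘ γ) (v * d) t := by
  intro γ K hγ
  set g : ℝ → ℝ := f ∘ γ with hg_def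
  -- g is Lipschitz on every ball `ball 0 n`
  have key : ∀ n : ℕ, ∃ K', LipschitzOnWith K' g (Metric.ball (0 : ℝ) n) := by
    intro n
    obtain ⟨Kf, hKf⟩ := convexOn_exists_lipschitzOnWith f hf (γ 0) (K * n + 1)
    refine ⟨Kf * K, hKf.comp (hγ.lipschitzOnWith (s := Metric.ball (0:ℝ) n)) ?_⟩
    intro t ht
    simp only [Metric.mem_ball] at ht ⊢
    have := hγ.dist_le_mul t 0
    have hKn : (K : ℝ) * dist t 0 ≤ K * n := by
      have : (0:ℝ) ≤ K := K.coe_nonneg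
      nlinarith [dist_nonneg (x := t) (y := (0:ℝ))]
    calc dist (γ t) (γ 0) ≤ K * dist t 0 := hγ.dist_le_mul t 0
      _ ≤ K * n := hKn
      _ < K * n + 1 := by linarith
  have hae1 : ∀ᵐ t : ℝ, DifferentiableAt ℝ γ t := hγ.ae_differentiableAt
  have hae2 : ∀ᵐ t : ℝ, DifferentiableAt ℝ g t := by
    have H : ∀ n : ℕ, ∀ᵐ t : ℝ, t ∈ Metric.ball (0 : ℝ) n →
        DifferentiableWithinAt ℝ g (Metric.ball (0 : ℝ) n) t := by
      intro n
      obtain ⟨K', hK'⟩ := key n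
      exact hK'.ae_differentiableWithinAt_of_mem
    rw [← MeasureTheory.ae_all_iff] at H
    filter_upwards [H] with t ht
    obtain ⟨n, hn⟩ := exists_nat_gt |t|
    have htn : t ∈ Metric.ball (0 : ℝ) n := by
      simp [Real.dist_eq, abs_nonneg, hn]
    exact (ht n htn).differentiableAt (Metric.isOpen_ball.mem_nhds htn)
  filter_upwards [hae1, hae2] with t h1 h2
  refine ⟨deriv γ t, h1.hasDerivAt, ?_⟩
  intro v hv
  have hgd := h2.hasDerivAt
  have hsg : Tendsto (slope g t) (nhdsWithin t {t}ᶜ) (nhds (deriv g t)) :=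
    hasDerivAt_iff_tendsto_slope.1 hgd
  have hsγ : Tendsto (fun s => v * slope γ t s) (nhdsWithin t {t}ᶜ)
      (nhds (v * deriv γ t)) := (hasDerivAt_iff_tendsto_slope.1 h1.hasDerivAt).const_mul v
  have hIoi : Set.Ioi t ⊆ ({t} : Set ℝ)ᶜ := fun s hs => by
    simp only [Set.mem_compl_iff, Set.mem_singleton_iff]
    exact ne_of_gt hs
  have hIio : Set.Iio t ⊆ ({t} : Set ℝ)ᶜ := fun s hs => by
    simp only [Set.mem_compl_iff, Set.mem_singleton_iff]
    exact ne_of_lt hs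
  -- the subgradient inequality along the curve
  have hineq : ∀ s : ℝ, v * (γ s - γ t) ≤ g s - g t := by
    intro s
    have := hv (γ s)
    simp only [hg_def, Function.comp_apply]
    linarith
  have h_ge : v * deriv γ t ≤ deriv g t := by
    refine le_of_tendsto_of_tendsto (hsγ.mono_left (nhdsWithin_mono t hIoi))
      (hsg.mono_left (nhdsWithin_mono t hIoi))
      (eventually_nhdsWithin_of_forall fun s hs => ?_)
    have hst : 0 < s - t := sub_pos.2 hs
    simp only [slope_def_field, ← mul_div_assoc]
    exact div_le_div_of_nonneg_right (hineq s) hst.le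
  have h_le : deriv g t ≤ v * deriv γ t := by
    refine le_of_tendsto_of_tendsto (hsg.mono_left (nhdsWithin_mono t hIio))
      (hsγ.mono_left (nhdsWithin_mono t hIio))
      (eventually_nhdsWithin_of_forall fun s hs => ?_)
    have hst : s - t < 0 := sub_neg.2 hs
    simp only [slope_def_field, ← mul_div_assoc]
    rw [div_le_div_right_of_neg hst]
    exact hineq s
  have : v * deriv γ t = deriv g t := le_antisymm h_ge h_le
  rw [this]
  exact hgd
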